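/- The map $\varphi : \mathbb{C}^2\setminus\{0\} \to \ell^2$ given by $\varphi(z_1,z_2) = \left(\sqrt{\tfrac{j+k}{j!\,k!}}\,z_1^j z_2^k\right)_{j+k \ge 1}$ satisfies $\sum_{j+k\ge 1}\frac{j+k}{j!\,k!}|z_1|^{2j}|z_2|^{2k} = e^{|z|^2}|z|^2$ where $|z|^2 = |z_1|^2+|z_2|^2$; in particular, $\log\|\varphi(z)\|^2 = |z|^2 + \log|z|^2$. -/

import Mathlib

open Real

lemma exp_tsum' (x : ℝ) : ∑' n : ℕ, x ^ n / n.factorial = Real.exp x := by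
  rw [Real.exp_eq_exp_ℝ, NormedSpace.exp_eq_tsum_div]

lemma summable_aux' (x : ℝ) : Summable (fun n : ℕ => (n : ℝ) * x ^ n / n.factorial) := by
  rw [← summable_nat_add_iff 1]
  have : (fun n : ℕ => ((n+1 : ℕ) : ℝ) * x ^ (n+1) / (n+1).factorial)
      = fun n : ℕ => x * (x ^ n / n.factorial) := by
    funext n; rw [Nat.factorial_succ]; push_cast; field_simp; ring
  rw [this]
  exact (Real.summable_pow_div_factorial x).mul_left x

lemma tsum_aux' (x : ℝ) : ∑' n : ℕ, (n : ℝ) * x ^ n / n.factorial = x * Real.exp x := by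
  rw [(summable_aux' x).tsum_eq_zero_add]
  simp only [Nat.cast_zero, zero_mul, zero_div, zero_add]
  push_cast
  rw [show (fun n : ℕ => ((n:ℝ)+1) * x ^ (n+1) / ((n+1).factorial : ℝ))
        = fun n : ℕ => x * (x ^ n / n.factorial) from by
      funext n; rw [Nat.factorial_succ]; push_cast; field_simp; ring,
    tsum_mul_left, exp_tsum']

set_option maxHeartbeats 2000000 in
lemma simanca_main (a b : ℝ) :
    ∑' p : ℕ × ℕ, ((p.1 + p.2 : ℝ) / (p.1.factorial * p.2.factorial)) * a ^ p.1 * b ^ p.2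
      = Real.exp (a + b) * (a + b) := by
  have hA : Summable (fun n : ℕ => ‖(n : ℝ) * a ^ n / n.factorial‖) := by
    simpa only [Real.norm_eq_abs] using (summable_aux' a).abs
  have hB : Summable (fun n : ℕ => ‖(n : ℝ) * b ^ n / n.factorial‖) := by
    simpa only [Real.norm_eq_abs] using (summable_aux' b).abs
  have hEa : Summable (fun n : ℕ => ‖a ^ n / n.factorial‖) := by
    simpa only [Real.norm_eq_abs] using (Real.summable_pow_div_factorial a).abs
  have hEb : Summable (fun n : ℕ => ‖b ^ n / n.factorial‖) := by
    simpa only [Real.norm_eq_abs] using (Real.summable_pow_div_factorial b).abs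
  have hS1 : Summable (fun p : ℕ × ℕ => ((p.1 : ℝ) * a ^ p.1 / p.1.factorial) * (b ^ p.2 / p.2.factorial)) :=
    summable_mul_of_summable_norm hA hEb
  have hS2 : Summable (fun p : ℕ × ℕ => (a ^ p.1 / p.1.factorial) * ((p.2 : ℝ) * b ^ p.2 / p.2.factorial)) :=
    summable_mul_of_summable_norm hEa hB
  have hpt : (fun p : ℕ × ℕ => ((p.1 + p.2 : ℝ) / (p.1.factorial * p.2.factorial)) * a ^ p.1 * b ^ p.2)
      = fun p : ℕ × ℕ => ((p.1 : ℝ) * a ^ p.1 / p.1.factorial) * (b ^ p.2 / p.2.factorial)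
        + (a ^ p.1 / p.1.factorial) * ((p.2 : ℝ) * b ^ p.2 / p.2.factorial) := by
    funext p
    have h1 : (p.1.factorial : ℝ) ≠ 0 := Nat.cast_ne_zero.mpr p.1.factorial_ne_zero
    have h2 : (p.2.factorial : ℝ) ≠ 0 := Nat.cast_ne_zero.mpr p.2.factorial_ne_zero
    field_simp
  rw [hpt, hS1.tsum_add hS2,
    ← tsum_mul_tsum_of_summable_norm hA hEb, ← tsum_mul_tsum_of_summable_norm hEa hB,
    tsum_aux' a, tsum_aux' b, exp_tsum' a, exp_tsum' b, Real.exp_add]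
  ring

theorem simanca_coherent_states_norm (z₁ z₂ : ℂ) :
    (∑' p : {p : ℕ × ℕ // 1 ≤ p.1 + p.2},
        ((p.1.1 + p.1.2 : ℝ) / (p.1.1.factorial * p.1.2.factorial))
          * ‖z₁‖^(2*p.1.1) * ‖z₂‖^(2*p.1.2)
      = Real.exp (‖z₁‖^2 + ‖z₂‖^2)
          * (‖z₁‖^2 + ‖z₂‖^2))
    ∧ ((z₁, z₂) ≠ (0, 0) →
        Real.log (∑' p : {p : ℕ × ℕ // 1 ≤ p.1 + p.2},
          ((p.1.1 + p.1.2 : ℝ) / (p.1.1.factorial * p.1.2.factorial))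
            * ‖z₁‖^(2*p.1.1) * ‖z₂‖^(2*p.1.2))
        = (‖z₁‖^2 + ‖z₂‖^2)
            + Real.log (‖z₁‖^2 + ‖z₂‖^2)) := by
  set a : ℝ := ‖z₁‖ ^ 2 with ha
  set b : ℝ := ‖z₂‖ ^ 2 with hb
  have hkey : (∑' p : {p : ℕ × ℕ // 1 ≤ p.1 + p.2},
      ((p.1.1 + p.1.2 : ℝ) / (p.1.1.factorial * p.1.2.factorial))
        * ‖z₁‖^(2*p.1.1) * ‖z₂‖^(2*p.1.2))
      = Real.exp (a + b) * (a + b) := by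
    have hfun : ∀ p : ℕ × ℕ,
        ((p.1 + p.2 : ℝ) / (p.1.factorial * p.2.factorial))
          * ‖z₁‖^(2*p.1) * ‖z₂‖^(2*p.2)
        = ((p.1 + p.2 : ℝ) / (p.1.factorial * p.2.factorial)) * a ^ p.1 * b ^ p.2 := by
      intro p
      rw [ha, hb, ← pow_mul, ← pow_mul]
    have hsupp : Function.support (fun p : ℕ × ℕ =>
        ((p.1 + p.2 : ℝ) / (p.1.factorial * p.2.factorial))
          * ‖z₁‖^(2*p.1) * ‖z₂‖^(2*p.2))
        ⊆ {p : ℕ × ℕ | 1 ≤ p.1 + p.2} := by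
      intro p hp
      by_contra h
      simp only [Set.mem_setOf_eq, not_le, Nat.lt_one_iff] at h
      apply hp
      simp [h, Nat.eq_zero_of_add_eq_zero_right h, Nat.eq_zero_of_add_eq_zero_left h]
    calc (∑' p : {p : ℕ × ℕ // 1 ≤ p.1 + p.2},
          ((p.1.1 + p.1.2 : ℝ) / (p.1.1.factorial * p.1.2.factorial))
            * ‖z₁‖^(2*p.1.1) * ‖z₂‖^(2*p.1.2))
        = ∑' p : ℕ × ℕ, ((p.1 + p.2 : ℝ) / (p.1.factorial * p.2.factorial))
            * ‖z₁‖^(2*p.1) * ‖z₂‖^(2*p.2) :=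
          tsum_subtype_eq_of_support_subset hsupp
      _ = ∑' p : ℕ × ℕ, ((p.1 + p.2 : ℝ) / (p.1.factorial * p.2.factorial)) * a ^ p.1 * b ^ p.2 := by
          exact tsum_congr hfun
      _ = Real.exp (a + b) * (a + b) := simanca_main a b
  refine ⟨hkey, fun hz => ?_⟩
  rw [hkey]
  have hab : 0 < a + b := by
    have : z₁ ≠ 0 ∨ z₂ ≠ 0 := by
      by_contra hc
      push_neg at hc
      exact hz (by simp [hc.1, hc.2])
    rcases this with h1 | h2
    · have h3 : 0 < a := pow_pos (norm_pos_iff.mpr h1) 2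
      have h4 : 0 ≤ b := by positivity
      linarith
    · have h3 : 0 < b := pow_pos (norm_pos_iff.mpr h2) 2
      have h4 : 0 ≤ a := by positivity
      linarith
  rw [Real.log_mul (Real.exp_ne_zero _) hab.ne', Real.log_exp]
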